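/- arXiv:1205.5610 — 2 statements merged into one kernel-verified Lean document; each statement's English description precedes it below -/
import Mathlib

section
/- Let F(z) = 4|c|²|z|²(Re z + 2)/(|z|² + 2Re z)² with c ≠ 0. Writing z = x + iy, along the curve where y/x = m is a fixed real constant, F(z) tends to 2|c|²(1 + m²) as z → 0. -/
open Filter Topology

/-- For `F(z) = 4|c|²|z|²(Re z + 2)/(|z|² + 2Re z)²` with `c ≠ 0`, along the curve
`y = m·x` (i.e. `z = x + i m x`), `F` tends to `2|c|²(1+m²)` as `x → 0⁻`. -/
theorem levi_form_limit_along_ray (c : ℂ) (hc : c ≠ 0) (m : ℝ) :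
    Tendsto (fun x : ℝ =>
        4 * ‖c‖ ^ 2 * ((x ^ 2 + (m * x) ^ 2) * (x + 2)) /
          (x ^ 2 + (m * x) ^ 2 + 2 * x) ^ 2)
      (nhdsWithin 0 (Set.Iio 0)) (nhds (2 * ‖c‖ ^ 2 * (1 + m ^ 2))) := by
  have hg : Tendsto (fun x : ℝ =>
      4 * ‖c‖ ^ 2 * (1 + m ^ 2) * (x + 2) / ((1 + m ^ 2) * x + 2) ^ 2)
      (nhds (0:ℝ)) (nhds (2 * ‖c‖ ^ 2 * (1 + m ^ 2))) := by
    have hnum : Tendsto (fun x : ℝ => 4 * ‖c‖ ^ 2 * (1 + m ^ 2) * (x + 2))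
        (nhds (0:ℝ)) (nhds (4 * ‖c‖ ^ 2 * (1 + m ^ 2) * (0 + 2))) := by
      exact (tendsto_const_nhds.mul (tendsto_id.add tendsto_const_nhds))
    have hden : Tendsto (fun x : ℝ => ((1 + m ^ 2) * x + 2) ^ 2)
        (nhds (0:ℝ)) (nhds (((1 + m ^ 2) * 0 + 2) ^ 2)) := by
      exact ((tendsto_const_nhds.mul tendsto_id).add tendsto_const_nhds).pow 2
    have h4 : (((1 + m ^ 2) * (0:ℝ) + 2) ^ 2) ≠ 0 := by norm_num
    have := hnum.div hden h4
    simp only [Pi.div_def] at this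
    convert this using 2
    field_simp
    ring
  refine (hg.mono_left nhdsWithin_le_nhds).congr' ?_
  filter_upwards [self_mem_nhdsWithin] with x hx
  have hx0 : x ≠ 0 := ne_of_lt hx
  have hx2 : x ^ 2 ≠ 0 := pow_ne_zero 2 hx0
  have key : 4 * ‖c‖ ^ 2 * ((x ^ 2 + (m * x) ^ 2) * (x + 2)) /
          (x ^ 2 + (m * x) ^ 2 + 2 * x) ^ 2
      = (x ^ 2 * (4 * ‖c‖ ^ 2 * (1 + m ^ 2) * (x + 2))) /
          (x ^ 2 * ((1 + m ^ 2) * x + 2) ^ 2) := by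
    congr 1 <;> ring
  rw [key, mul_div_mul_left _ _ hx2]
end

section
/- For u, v ∈ ℂ in a neighborhood of 0 (more generally wherever all terms are defined), the Jacobi elliptic functions satisfy the addition formula sn(u+v) = (sn u · cn v · dn v + sn v · cn u · dn u)/(1 - k² sn²u · sn²v). -/
/-- Addition formula for the Jacobi elliptic function `sn`: if `sn, cn, dn` solve the
system `sn' = cn·dn`, `cn' = -sn·dn`, `dn' = -k²·sn·cn` with `sn 0 = 0`, `cn 0 = 1`,
`dn 0 = 1`, then wherever the denominator is nonzero,
`sn(u+v) = (sn u cn v dn v + sn v cn u dn u)/(1 - k² sn²u sn²v)`. -/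
theorem jacobi_sn_addition (k : ℝ) (sn cn dn : ℝ → ℝ)
    (hsn : ∀ t, HasDerivAt sn (cn t * dn t) t)
    (hcn : ∀ t, HasDerivAt cn (-(sn t * dn t)) t)
    (hdn : ∀ t, HasDerivAt dn (-(k ^ 2 * sn t * cn t)) t)
    (hsn0 : sn 0 = 0) (hcn0 : cn 0 = 1) (hdn0 : dn 0 = 1)
    (hcn2 : ∀ t, cn t ^ 2 = 1 - sn t ^ 2)
    (hdn2 : ∀ t, dn t ^ 2 = 1 - k ^ 2 * sn t ^ 2) :
    ∀ u v : ℝ, 1 - k ^ 2 * sn u ^ 2 * sn v ^ 2 ≠ 0 →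
      sn (u + v) =
        (sn u * cn v * dn v + sn v * cn u * dn u) /
          (1 - k ^ 2 * sn u ^ 2 * sn v ^ 2) := by
  -- basic bounds
  have hsq : ∀ t, sn t ^ 2 ≤ 1 := fun t => by nlinarith [sq_nonneg (cn t), hcn2 t]
  have hksq : ∀ t, k ^ 2 * sn t ^ 2 ≤ 1 := fun t => by nlinarith [sq_nonneg (dn t), hdn2 t]
  -- in the case k² = 1, sn never reaches ±1 (Gronwall-type argument)
  have hlt : k ^ 2 = 1 → ∀ t, sn t ^ 2 < 1 := by
    intro hk t
    have hdc : ∀ x, dn x ^ 2 = cn x ^ 2 := fun x => by rw [hdn2, hcn2, hk]; ring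
    have hs1 : ∀ x, sn x ≤ 1 := fun x => by nlinarith [hsq x]
    have hs2 : ∀ x, (-1 : ℝ) ≤ sn x := fun x => by nlinarith [hsq x]
    have hub : ∀ x, sn x * cn x * dn x ≤ cn x ^ 2 := by
      intro x
      have h1 : (0:ℝ) ≤ (1 + sn x) * (cn x - dn x)^2 :=
        mul_nonneg (by linarith [hs2 x]) (sq_nonneg _)
      have h2 : (0:ℝ) ≤ (1 - sn x) * (cn x + dn x)^2 :=
        mul_nonneg (by linarith [hs1 x]) (sq_nonneg _)
      nlinarith [hdc x]
    have hlb : ∀ x, -(cn x ^ 2) ≤ sn x * cn x * dn x := by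
      intro x
      have h1 : (0:ℝ) ≤ (1 - sn x) * (cn x - dn x)^2 :=
        mul_nonneg (by linarith [hs1 x]) (sq_nonneg _)
      have h2 : (0:ℝ) ≤ (1 + sn x) * (cn x + dn x)^2 :=
        mul_nonneg (by linarith [hs2 x]) (sq_nonneg _)
      nlinarith [hdc x]
    -- cn² > 0 everywhere
    have hcpos : 0 < cn t ^ 2 := by
      rcases le_or_gt 0 t with ht | ht
      · -- use g(x) = exp(2x) * cn x ^ 2, monotone
        have hg : ∀ x, HasDerivAt (fun x => Real.exp (2*x) * cn x ^ 2)
            (Real.exp (2*x) * (2 * cn x ^ 2 - 2 * (sn x * cn x * dn x))) x := by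
          intro x
          have hlin : HasDerivAt (fun x : ℝ => 2*x) 2 x := by
            simpa using (hasDerivAt_id x).const_mul (2:ℝ)
          have h := hlin.exp.mul ((hcn x).pow 2)
          refine h.congr_deriv (Eq.symm ?_)
          simp only [Pi.mul_apply, Pi.pow_apply]
          push_cast
          ring
        have hmono : Monotone (fun x => Real.exp (2*x) * cn x ^ 2) := by
          apply monotone_of_deriv_nonneg (fun x => (hg x).differentiableAt)
          intro x
          rw [(hg x).deriv]
          have := hub x
          nlinarith [Real.exp_pos (2*x)]
        have h1 : Real.exp (2*0) * cn 0 ^ 2 ≤ Real.exp (2*t) * cn t ^ 2 := hmono ht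
        have h2 : Real.exp (2*(0:ℝ)) * cn 0 ^ 2 = 1 := by simp [hcn0]
        nlinarith [Real.exp_pos (2*t), sq_nonneg (cn t)]
      · -- use g(x) = exp(-2x) * cn x ^ 2, antitone
        have hg : ∀ x, HasDerivAt (fun x => Real.exp (-2*x) * cn x ^ 2)
            (Real.exp (-2*x) * (-(2 * cn x ^ 2) - 2 * (sn x * cn x * dn x))) x := by
          intro x
          have hlin : HasDerivAt (fun x : ℝ => -2*x) (-2) x := by
            simpa using (hasDerivAt_id x).const_mul (-2:ℝ)
          have h := hlin.exp.mul ((hcn x).pow 2)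
          refine h.congr_deriv (Eq.symm ?_)
          simp only [Pi.mul_apply, Pi.pow_apply]
          push_cast
          ring
        have hmono : Antitone (fun x => Real.exp (-2*x) * cn x ^ 2) := by
          apply antitone_of_deriv_nonpos (fun x => (hg x).differentiableAt)
          intro x
          rw [(hg x).deriv]
          have := hlb x
          nlinarith [Real.exp_pos (-2*x)]
        have h1 : Real.exp (-2*0) * cn 0 ^ 2 ≤ Real.exp (-2*t) * cn t ^ 2 := hmono ht.le
        have h2 : Real.exp (-2*(0:ℝ)) * cn 0 ^ 2 = 1 := by simp [hcn0]
        nlinarith [Real.exp_pos (-2*t), sq_nonneg (cn t)]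
    nlinarith [hcn2 t]
  -- the denominator never vanishes
  have hD : ∀ x y : ℝ, (0:ℝ) < 1 - k ^ 2 * sn x ^ 2 * sn y ^ 2 := by
    intro x y
    by_cases hk : k ^ 2 = 1
    · rw [hk]
      nlinarith [hlt hk x, hlt hk y, sq_nonneg (sn x), sq_nonneg (sn y),
        mul_nonneg (sq_nonneg (sn x)) (sq_nonneg (sn y))]
    · rcases lt_or_ge (k ^ 2 * sn x ^ 2) 1 with h | h
      · nlinarith [hsq y, sq_nonneg (sn y), mul_nonneg (sq_nonneg k) (sq_nonneg (sn x))]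
      · have h1 : k ^ 2 * sn x ^ 2 = 1 := le_antisymm (hksq x) h
        by_cases hy : sn y ^ 2 = 1
        · exfalso
          have hk1 : k ^ 2 ≤ 1 := by have := hksq y; rw [hy] at this; linarith
          have hk2 : 1 ≤ k ^ 2 := by nlinarith [hsq x, sq_nonneg k]
          exact hk (le_antisymm hk1 hk2)
        · have hy' : sn y ^ 2 < 1 := lt_of_le_of_ne (hsq y) hy
          nlinarith [sq_nonneg (sn y)]
  intro u v huv
  set s := u + v with hs
  -- derivatives of the reflected functions
  have hneg : ∀ t : ℝ, HasDerivAt (fun t : ℝ => s - t) (-1) t := by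
    intro t
    simpa using ((hasDerivAt_id t).const_sub s)
  have hA' : ∀ t : ℝ, HasDerivAt (fun t => sn (s - t)) (-(cn (s-t) * dn (s-t))) t := by
    intro t
    have h2 := (hsn (s - t)).comp t (hneg t)
    refine h2.congr_deriv (Eq.symm ?_)
    ring
  have hB' : ∀ t : ℝ, HasDerivAt (fun t => cn (s - t)) (sn (s-t) * dn (s-t)) t := by
    intro t
    have h2 := (hcn (s - t)).comp t (hneg t)
    refine h2.congr_deriv (Eq.symm ?_)
    ring
  have hC' : ∀ t : ℝ, HasDerivAt (fun t => dn (s - t)) (k^2 * sn (s-t) * cn (s-t)) t := by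
    intro t
    have h2 := (hdn (s - t)).comp t (hneg t)
    refine h2.congr_deriv (Eq.symm ?_)
    ring
  -- numerator and denominator
  have hNt : ∀ t, HasDerivAt
      (fun t => sn t * cn (s-t) * dn (s-t) + sn (s-t) * cn t * dn t)
      (2*k^2*sn t*sn (s-t)*(sn t^2 - sn (s-t)^2)) t := by
    intro t
    have h := (((hsn t).mul (hB' t)).mul (hC' t)).add (((hA' t).mul (hcn t)).mul (hdn t))
    refine h.congr_deriv (Eq.symm ?_)
    simp only [Pi.mul_apply, Pi.pow_apply]
    linear_combination (-(sn t*sn (s-t)))*(hdn2 (s-t)) + (sn t*sn (s-t))*(hdn2 t)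
      + (-(k^2*sn t*sn (s-t)))*(hcn2 (s-t)) + (k^2*sn t*sn (s-t))*(hcn2 t)
  have hDt : ∀ t, HasDerivAt
      (fun t => 1 - k^2 * sn t^2 * sn (s-t)^2)
      (-2*k^2*sn t*sn (s-t)*(cn t*dn t*sn (s-t) - sn t*cn (s-t)*dn (s-t))) t := by
    intro t
    have h := (hasDerivAt_const t (1:ℝ)).sub
      ((((hsn t).pow 2).const_mul (k^2)).mul ((hA' t).pow 2))
    refine h.congr_deriv (Eq.symm ?_)
    simp only [Pi.mul_apply, Pi.pow_apply]
    ring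
  -- the key algebraic identity: N'·D - N·D' = 0
  have key : ∀ t,
      (2*k^2*sn t*sn (s-t)*(sn t^2 - sn (s-t)^2)) * (1 - k^2 * sn t^2 * sn (s-t)^2) -
        (sn t * cn (s-t) * dn (s-t) + sn (s-t) * cn t * dn t) *
          (-2*k^2*sn t*sn (s-t)*(cn t*dn t*sn (s-t) - sn t*cn (s-t)*dn (s-t))) = 0 := by
    intro t
    linear_combination
      (2*k^2*sn t*sn (s-t)*(sn (s-t))^2*(dn t)^2) * (hcn2 t)
      + (2*k^2*sn t*sn (s-t)*(sn (s-t))^2*(1 - sn t^2)) * (hdn2 t)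
      - (2*k^2*sn t*sn (s-t)*(sn t)^2*(dn (s-t))^2) * (hcn2 (s-t))
      - (2*k^2*sn t*sn (s-t)*(sn t)^2*(1 - sn (s-t)^2)) * (hdn2 (s-t))
  -- the quotient has zero derivative everywhere
  have hf : ∀ t, HasDerivAt
      (fun t => (sn t * cn (s-t) * dn (s-t) + sn (s-t) * cn t * dn t) /
        (1 - k^2 * sn t^2 * sn (s-t)^2)) 0 t := by
    intro t
    have h := (hNt t).div (hDt t) (ne_of_gt (hD t (s-t)))
    refine h.congr_deriv (Eq.symm ?_)
    rw [show (2*k^2*sn t*sn (s-t)*(sn t^2 - sn (s-t)^2)) * (1 - k^2 * sn t^2 * sn (s-t)^2) -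
        (sn t * cn (s-t) * dn (s-t) + sn (s-t) * cn t * dn t) *
          (-2*k^2*sn t*sn (s-t)*(cn t*dn t*sn (s-t) - sn t*cn (s-t)*dn (s-t))) = 0 from key t,
      zero_div]
  -- hence it is constant
  have hconst := is_const_of_deriv_eq_zero (f := fun t =>
      (sn t * cn (s-t) * dn (s-t) + sn (s-t) * cn t * dn t) /
        (1 - k^2 * sn t^2 * sn (s-t)^2))
    (fun t => (hf t).differentiableAt) (fun t => (hf t).deriv) u 0
  have h0 : (sn (0:ℝ) * cn (s-0) * dn (s-0) + sn (s-0) * cn 0 * dn 0) /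
      (1 - k^2 * sn 0^2 * sn (s-0)^2) = sn s := by
    simp [hsn0, hcn0, hdn0]
  have hsu : s - u = v := by rw [hs]; ring
  rw [hsu] at hconst
  rw [h0] at hconst
  rw [← hconst]
end
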